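/- Fix 0 < α < 1 and positive definite operators B, C on a finite-dimensional complex Hilbert space H. If for every positive definite A one has tr(exp(α log A + (1−α) log B)) ≤ tr(exp(α log A + (1−α) log C)), then log B ≤ log C. -/

import Mathlib

open Matrix Filter
open scoped ComplexOrder

/-- Functional calculus for Hermitian matrices: apply `f` to the eigenvalues. -/
noncomputable def mfun {d : ℕ} (f : ℝ → ℝ) (A : Matrix (Fin d) (Fin d) ℂ) :
    Matrix (Fin d) (Fin d) ℂ :=
  if hA : A.IsHermitian then
    (hA.eigenvectorUnitary : Matrix (Fin d) (Fin d) ℂ) *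
      Matrix.diagonal (fun i => (f (hA.eigenvalues i) : ℂ)) *
      star (hA.eigenvectorUnitary : Matrix (Fin d) (Fin d) ℂ)
  else 0

noncomputable def mexp {d : ℕ} (A : Matrix (Fin d) (Fin d) ℂ) : Matrix (Fin d) (Fin d) ℂ :=
  mfun Real.exp A

noncomputable def mlog {d : ℕ} (A : Matrix (Fin d) (Fin d) ℂ) : Matrix (Fin d) (Fin d) ℂ :=
  mfun Real.log A

/-- The Löwner order: `A ≤ B` iff `B - A` is positive semidefinite. -/
def loewnerLE {d : ℕ} (A B : Matrix (Fin d) (Fin d) ℂ) : Prop :=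
  (B - A).PosSemidef

/-- The quadratic form ⟨Ax, x⟩. -/
noncomputable def qf {d : ℕ} (A : Matrix (Fin d) (Fin d) ℂ) (x : Fin d → ℂ) : ℂ :=
  star x ⬝ᵥ A.mulVec x

/-- The rank-one projection x ⊗ x. -/
noncomputable def rankOneProj {d : ℕ} (x : Fin d → ℂ) : Matrix (Fin d) (Fin d) ℂ :=
  Matrix.vecMulVec x (star x)


section ChaosAux
variable {d : ℕ}


lemma mfun_eq_cfc (f : ℝ → ℝ) {A : Matrix (Fin d) (Fin d) ℂ} (hA : A.IsHermitian) :
    mfun f A = cfc f A := by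
  rw [mfun, dif_pos hA, hA.cfc_eq, Matrix.IsHermitian.cfc]; rfl


lemma trace_mfun (f : ℝ → ℝ) {A : Matrix (Fin d) (Fin d) ℂ} (hA : A.IsHermitian) :
    (mfun f A).trace = ((∑ i, f (hA.eigenvalues i) : ℝ) : ℂ) := by
  rw [mfun, dif_pos hA, Matrix.trace_mul_cycle]
  rw [show star (hA.eigenvectorUnitary : Matrix (Fin d) (Fin d) ℂ) *
      (hA.eigenvectorUnitary : Matrix (Fin d) (Fin d) ℂ) = 1 from
    Unitary.star_mul_self_of_mem hA.eigenvectorUnitary.2, one_mul, trace_diagonal]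
  push_cast
  rfl

lemma trace_mexp {A : Matrix (Fin d) (Fin d) ℂ} (hA : A.IsHermitian) :
    (mexp A).trace = ((∑ i, Real.exp (hA.eigenvalues i) : ℝ) : ℂ) := by
  rw [mexp, trace_mfun Real.exp hA]

lemma isHermitian_mfun (f : ℝ → ℝ) {A : Matrix (Fin d) (Fin d) ℂ} (hA : A.IsHermitian) :
    (mfun f A).IsHermitian := by
  rw [mfun_eq_cfc f hA]
  exact (cfc_predicate f A : IsSelfAdjoint _)

lemma star_vecMul_eigU {A : Matrix (Fin d) (Fin d) ℂ} (hA : A.IsHermitian) (v : Fin d → ℂ) :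
    star v ᵥ* (hA.eigenvectorUnitary : Matrix (Fin d) (Fin d) ℂ) =
      star (star (hA.eigenvectorUnitary : Matrix (Fin d) (Fin d) ℂ) *ᵥ v) := by
  rw [star_mulVec]; simp [star_eq_conjTranspose]


lemma dot_star_self_eq (u : Fin d → ℂ) :
    star u ⬝ᵥ u = ((∑ i, Complex.normSq (u i) : ℝ) : ℂ) := by
  push_cast
  simp [dotProduct, Complex.normSq_eq_conj_mul_self]


lemma qf_spectral {A : Matrix (Fin d) (Fin d) ℂ} (hA : A.IsHermitian) (v : Fin d → ℂ) :
    star v ⬝ᵥ A *ᵥ v =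
      ((∑ i, hA.eigenvalues i *
        Complex.normSq ((star (hA.eigenvectorUnitary : Matrix (Fin d) (Fin d) ℂ) *ᵥ v) i) : ℝ) : ℂ) := by
  conv_lhs => rw [hA.spectral_theorem, Unitary.conjStarAlgAut_apply]
  rw [← mulVec_mulVec, ← mulVec_mulVec, dotProduct_mulVec, star_vecMul_eigU hA]
  push_cast
  simp only [mulVec_diagonal, dotProduct, Pi.star_apply, Function.comp_apply]
  congr 1
  ext i
  rw [Complex.normSq_eq_conj_mul_self]
  simp only [Complex.star_def]
  exact mul_left_comm _ _ _

lemma coord_norm_spectral {A : Matrix (Fin d) (Fin d) ℂ} (hA : A.IsHermitian) (v : Fin d → ℂ) :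
    ((∑ i, Complex.normSq ((star (hA.eigenvectorUnitary : Matrix (Fin d) (Fin d) ℂ) *ᵥ v) i) : ℝ) : ℂ)
      = star v ⬝ᵥ v := by
  rw [← dot_star_self_eq]
  set U : Matrix (Fin d) (Fin d) ℂ := (hA.eigenvectorUnitary : Matrix (Fin d) (Fin d) ℂ) with hU
  have h1 : star (star U *ᵥ v) = star v ᵥ* U := (star_vecMul_eigU hA v).symm
  rw [h1, ← dotProduct_mulVec, mulVec_mulVec,
    show U * star U = 1 from Unitary.mul_star_self_of_mem hA.eigenvectorUnitary.2, one_mulVec]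

lemma qf_mfun (f : ℝ → ℝ) {A : Matrix (Fin d) (Fin d) ℂ} (hA : A.IsHermitian) (v : Fin d → ℂ) :
    star v ⬝ᵥ (mfun f A) *ᵥ v =
      ((∑ i, f (hA.eigenvalues i) *
        Complex.normSq ((star (hA.eigenvectorUnitary : Matrix (Fin d) (Fin d) ℂ) *ᵥ v) i) : ℝ) : ℂ) := by
  rw [mfun, dif_pos hA]
  rw [← mulVec_mulVec, ← mulVec_mulVec, dotProduct_mulVec, star_vecMul_eigU hA]
  push_cast
  simp only [mulVec_diagonal, dotProduct, Pi.star_apply, Function.comp_apply]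
  congr 1
  ext i
  rw [Complex.normSq_eq_conj_mul_self]
  simp only [Complex.star_def]
  exact mul_left_comm _ _ _

lemma mexp_posDef {M : Matrix (Fin d) (Fin d) ℂ} (hM : M.IsHermitian) : (mexp M).PosDef := by
  refine posDef_iff_dotProduct_mulVec.mpr ⟨isHermitian_mfun _ hM, fun x hx => ?_⟩
  rw [mexp, qf_mfun Real.exp hM x]
  rw [Complex.zero_lt_real]
  set w : Fin d → ℂ := star (hM.eigenvectorUnitary : Matrix (Fin d) (Fin d) ℂ) *ᵥ x with hw
  have hsum : (0:ℝ) < ∑ i, Complex.normSq (w i) := by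
    have h1 : ((∑ i, Complex.normSq (w i) : ℝ) : ℂ) = star x ⬝ᵥ x := coord_norm_spectral hM x
    have h2 : star x ⬝ᵥ x = ((∑ i, Complex.normSq (x i) : ℝ) : ℂ) := dot_star_self_eq x
    have h3 : (∑ i, Complex.normSq (w i)) = ∑ i, Complex.normSq (x i) := by
      exact_mod_cast h1.trans h2
    rw [h3]
    obtain ⟨i, hi⟩ := Function.ne_iff.mp hx
    exact Finset.sum_pos' (fun j _ => Complex.normSq_nonneg _)
      ⟨i, Finset.mem_univ i, Complex.normSq_pos.mpr hi⟩
  obtain ⟨i, -, hi⟩ : ∃ i ∈ Finset.univ, 0 < Complex.normSq (w i) := by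
    by_contra hcon
    push_neg at hcon
    exact absurd (Finset.sum_nonpos fun j hj => hcon j hj) (not_le.mpr hsum)
  refine Finset.sum_pos' (fun j _ => mul_nonneg (Real.exp_pos _).le (Complex.normSq_nonneg _))
    ⟨i, Finset.mem_univ i, mul_pos (Real.exp_pos _) hi⟩

lemma mlog_mexp {M : Matrix (Fin d) (Fin d) ℂ} (hM : M.IsHermitian) : mlog (mexp M) = M := by
  have hE : (mexp M).IsHermitian := isHermitian_mfun _ hM
  have himg : ContinuousOn Real.log (Real.exp '' spectrum ℝ M) := by
    refine Real.continuousOn_log.mono ?_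
    rintro - ⟨y, -, rfl⟩
    simp [(Real.exp_pos y).ne']
  have hcomp := cfc_comp Real.log Real.exp M hM himg Real.continuous_exp.continuousOn
  rw [mlog, mfun_eq_cfc _ hE, mexp, mfun_eq_cfc _ hM, ← hcomp,
    show Real.log ∘ Real.exp = id from funext Real.log_exp]
  exact cfc_id ℝ M hM

lemma isHermitian_ofReal_smul {A : Matrix (Fin d) (Fin d) ℂ} (hA : A.IsHermitian) (r : ℝ) :
    (((r : ℂ)) • A).IsHermitian := by
  unfold Matrix.IsHermitian
  rw [conjTranspose_smul, hA.eq]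
  congr 1
  simp

lemma isHermitian_rankOne (x : Fin d → ℂ) : (vecMulVec x (star x)).IsHermitian := by
  ext i j
  simp [vecMulVec_apply, conjTranspose_apply, mul_comm]

lemma vecMulVec_mulVec' (x y v : Fin d → ℂ) : vecMulVec x y *ᵥ v = (y ⬝ᵥ v) • x := by
  ext i
  simp [vecMulVec_apply, mulVec, dotProduct, Finset.mul_sum, mul_comm, mul_left_comm, mul_assoc]

lemma qf_rankOne (x v : Fin d → ℂ) :
    star v ⬝ᵥ (vecMulVec x (star x)) *ᵥ v = ((Complex.normSq (star x ⬝ᵥ v) : ℝ) : ℂ) := by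
  rw [vecMulVec_mulVec', dotProduct_smul, smul_eq_mul]
  have h1 : star v ⬝ᵥ x = (starRingEnd ℂ) (star x ⬝ᵥ v) := by
    simp [dotProduct, Finset.sum_comm, map_sum, mul_comm]
  rw [h1, Complex.mul_conj]


lemma dot_self_re_nonneg (u : Fin d → ℂ) : 0 ≤ (star u ⬝ᵥ u).re := by
  rw [dot_star_self_eq, Complex.ofReal_re]
  exact Finset.sum_nonneg fun i _ => Complex.normSq_nonneg _

lemma qf_abs_le {K : Matrix (Fin d) (Fin d) ℂ} (hK : K.IsHermitian) {κ : ℝ}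
    (hκ : ∀ i, |hK.eigenvalues i| ≤ κ) (v : Fin d → ℂ) :
    |(star v ⬝ᵥ K *ᵥ v).re| ≤ κ * (star v ⬝ᵥ v).re := by
  rw [qf_spectral hK v, Complex.ofReal_re, ← coord_norm_spectral hK v, Complex.ofReal_re]
  calc |∑ i, hK.eigenvalues i * Complex.normSq ((star (hK.eigenvectorUnitary : Matrix (Fin d) (Fin d) ℂ) *ᵥ v) i)|
      ≤ ∑ i, |hK.eigenvalues i * Complex.normSq ((star (hK.eigenvectorUnitary : Matrix (Fin d) (Fin d) ℂ) *ᵥ v) i)| :=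
        Finset.abs_sum_le_sum_abs _ _
    _ ≤ ∑ i, κ * Complex.normSq ((star (hK.eigenvectorUnitary : Matrix (Fin d) (Fin d) ℂ) *ᵥ v) i) := by
        refine Finset.sum_le_sum fun i _ => ?_
        rw [abs_mul, abs_of_nonneg (Complex.normSq_nonneg _)]
        exact mul_le_mul_of_nonneg_right (hκ i) (Complex.normSq_nonneg _)
    _ = κ * ∑ i, Complex.normSq ((star (hK.eigenvectorUnitary : Matrix (Fin d) (Fin d) ℂ) *ᵥ v) i) := by
        rw [Finset.mul_sum]

lemma qf_add_expand (M : Matrix (Fin d) (Fin d) ℂ) (u v : Fin d → ℂ) :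
    star (u + v) ⬝ᵥ M *ᵥ (u + v) =
      star u ⬝ᵥ M *ᵥ u + star u ⬝ᵥ M *ᵥ v + star v ⬝ᵥ M *ᵥ u + star v ⬝ᵥ M *ᵥ v := by
  simp only [star_add, mulVec_add, add_dotProduct, dotProduct_add]
  ring

lemma qf_smul_smul (M : Matrix (Fin d) (Fin d) ℂ) (a b : ℂ) (u v : Fin d → ℂ) :
    star (a • u) ⬝ᵥ M *ᵥ (b • v) = star a * b * (star u ⬝ᵥ M *ᵥ v) := by
  simp only [star_smul, smul_dotProduct, mulVec_smul, dotProduct_smul, smul_eq_mul]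
  ring

lemma dot_add_expand (u v : Fin d → ℂ) :
    star (u + v) ⬝ᵥ (u + v) = star u ⬝ᵥ u + star u ⬝ᵥ v + star v ⬝ᵥ u + star v ⬝ᵥ v := by
  simp only [star_add, add_dotProduct, dotProduct_add]
  ring

lemma dot_smul_smul (a b : ℂ) (u v : Fin d → ℂ) :
    star (a • u) ⬝ᵥ (b • v) = star a * b * (star u ⬝ᵥ v) := by
  simp only [star_smul, smul_dotProduct, dotProduct_smul, smul_eq_mul]
  ring

lemma star_dot_comm (u v : Fin d → ℂ) : star v ⬝ᵥ u = (starRingEnd ℂ) (star u ⬝ᵥ v) := by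
  simp [dotProduct, map_sum, mul_comm]

lemma cross_bound {K : Matrix (Fin d) (Fin d) ℂ} (hK : K.IsHermitian) {κ : ℝ}
    (hκ : ∀ i, |hK.eigenvalues i| ≤ κ) (y z : Fin d → ℂ) (hyz : star y ⬝ᵥ z = 0)
    (r : ℝ) (hr : 0 < r) :
    ((star y ⬝ᵥ K *ᵥ z) + (star z ⬝ᵥ K *ᵥ y)).re ≤
      2 * κ * (r⁻¹ ^ 2 * (star y ⬝ᵥ y).re + r ^ 2 * (star z ⬝ᵥ z).re) := by
  set y' : Fin d → ℂ := ((r⁻¹ : ℝ) : ℂ) • y with hy'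
  set z' : Fin d → ℂ := ((r : ℝ) : ℂ) • z with hz'
  have hzy : star z ⬝ᵥ y = 0 := by rw [star_dot_comm y z, hyz, map_zero]
  have hrr : (r⁻¹ * r : ℝ) = 1 := inv_mul_cancel₀ hr.ne'
  have e1 : star (y' + z') ⬝ᵥ K *ᵥ (y' + z') =
      ((r⁻¹ ^ 2 : ℝ) : ℂ) * (star y ⬝ᵥ K *ᵥ y) + ((r ^ 2 : ℝ) : ℂ) * (star z ⬝ᵥ K *ᵥ z) +
        ((star y ⬝ᵥ K *ᵥ z) + (star z ⬝ᵥ K *ᵥ y)) := by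
    rw [qf_add_expand, hy', hz', qf_smul_smul, qf_smul_smul, qf_smul_smul, qf_smul_smul]
    simp only [Complex.star_def, Complex.conj_ofReal]
    rw [← Complex.ofReal_mul, ← Complex.ofReal_mul, ← Complex.ofReal_mul, hrr,
      mul_comm (r : ℝ) r⁻¹, hrr]
    push_cast
    ring
  have e2 : star (y' + z') ⬝ᵥ (y' + z') =
      ((r⁻¹ ^ 2 : ℝ) : ℂ) * (star y ⬝ᵥ y) + ((r ^ 2 : ℝ) : ℂ) * (star z ⬝ᵥ z) := by
    rw [dot_add_expand, hy', hz', dot_smul_smul, dot_smul_smul, dot_smul_smul, dot_smul_smul,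
      hyz, hzy]
    simp only [Complex.star_def, Complex.conj_ofReal]
    push_cast
    ring
  have hb1 := qf_abs_le hK hκ (y' + z')
  have hb2 := qf_abs_le hK hκ y
  have hb3 := qf_abs_le hK hκ z
  have hny := dot_self_re_nonneg y
  have hnz := dot_self_re_nonneg z
  have e1re : (star (y' + z') ⬝ᵥ K *ᵥ (y' + z')).re =
      r⁻¹ ^ 2 * (star y ⬝ᵥ K *ᵥ y).re + r ^ 2 * (star z ⬝ᵥ K *ᵥ z).re +
        ((star y ⬝ᵥ K *ᵥ z) + (star z ⬝ᵥ K *ᵥ y)).re := by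
    rw [e1, Complex.add_re, Complex.add_re, Complex.re_ofReal_mul, Complex.re_ofReal_mul]
  have e2re : (star (y' + z') ⬝ᵥ (y' + z')).re =
      r⁻¹ ^ 2 * (star y ⬝ᵥ y).re + r ^ 2 * (star z ⬝ᵥ z).re := by
    rw [e2, Complex.add_re, Complex.re_ofReal_mul, Complex.re_ofReal_mul]
  rw [e2re] at hb1
  rw [e1re] at hb1
  have h1 := abs_le.mp hb1
  have h2 := abs_le.mp hb2
  have h3 := abs_le.mp hb3
  have hr2 : (0:ℝ) ≤ r⁻¹ ^ 2 := sq_nonneg _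
  have hr3 : (0:ℝ) ≤ r ^ 2 := sq_nonneg _
  nlinarith [h1.2, h2.1, h3.1, mul_le_mul_of_nonneg_left h2.1 hr2, mul_le_mul_of_nonneg_left h3.1 hr3]


lemma exp_qf_le_trace {H : Matrix (Fin d) (Fin d) ℂ} (hH : H.IsHermitian) (v : Fin d → ℂ)
    (hv : star v ⬝ᵥ v = 1) :
    Real.exp ((star v ⬝ᵥ H *ᵥ v).re) ≤ ((mexp H).trace).re := by
  rw [trace_mexp hH, Complex.ofReal_re, qf_spectral hH v, Complex.ofReal_re]
  set n : Fin d → ℝ := fun i =>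
    Complex.normSq ((star (hH.eigenvectorUnitary : Matrix (Fin d) (Fin d) ℂ) *ᵥ v) i) with hn
  have hn0 : ∀ i ∈ Finset.univ, (0:ℝ) ≤ n i := fun i _ => Complex.normSq_nonneg _
  have hn1 : ∑ i, n i = 1 := by
    have := (coord_norm_spectral hH v).trans hv
    exact_mod_cast this
  have jensen := convexOn_exp.map_sum_le (t := Finset.univ) (w := n)
    (p := fun i => hH.eigenvalues i) hn0 hn1 (fun i _ => Set.mem_univ _)
  simp only [smul_eq_mul] at jensen
  calc Real.exp (∑ i, hH.eigenvalues i * n i)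
      = Real.exp (∑ i, n i * hH.eigenvalues i) := by
        congr 1; exact Finset.sum_congr rfl fun i _ => mul_comm _ _
    _ ≤ ∑ i, n i * Real.exp (hH.eigenvalues i) := jensen
    _ ≤ ∑ i, Real.exp (hH.eigenvalues i) := by
        refine Finset.sum_le_sum fun i _ => ?_
        have hni : n i ≤ 1 := by
          rw [← hn1]
          exact Finset.single_le_sum hn0 (Finset.mem_univ i)
        nlinarith [Real.exp_pos (hH.eigenvalues i), hn0 i (Finset.mem_univ i)]

lemma ortho_eig {M : Matrix (Fin d) (Fin d) ℂ} (hM : M.IsHermitian) (i j : Fin d) :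
    star (⇑(hM.eigenvectorBasis i) : Fin d → ℂ) ⬝ᵥ (⇑(hM.eigenvectorBasis j) : Fin d → ℂ) =
      if i = j then 1 else 0 := by
  have := orthonormal_iff_ite.mp hM.eigenvectorBasis.orthonormal i j
  rw [EuclideanSpace.inner_eq_star_dotProduct, dotProduct_comm] at this
  exact this

lemma qf_eig {M : Matrix (Fin d) (Fin d) ℂ} (hM : M.IsHermitian) (i : Fin d) :
    star (⇑(hM.eigenvectorBasis i) : Fin d → ℂ) ⬝ᵥ M *ᵥ (⇑(hM.eigenvectorBasis i) : Fin d → ℂ)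
      = ((hM.eigenvalues i : ℝ) : ℂ) := by
  rw [hM.mulVec_eigenvectorBasis]
  rw [dotProduct_smul]
  rw [ortho_eig hM i i]
  simp



lemma morth_eig {M : Matrix (Fin d) (Fin d) ℂ} (hM : M.IsHermitian) (i j : Fin d) :
    star (⇑(hM.eigenvectorBasis i) : Fin d → ℂ) ⬝ᵥ M *ᵥ (⇑(hM.eigenvectorBasis j) : Fin d → ℂ)
      = if i = j then ((hM.eigenvalues j : ℝ) : ℂ) else 0 := by
  rw [hM.mulVec_eigenvectorBasis, dotProduct_smul, ortho_eig hM i j]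
  split <;> simp

lemma main_bound (hd : 0 < d) (x : Fin d → ℂ) (hx : star x ⬝ᵥ x = 1)
    {K : Matrix (Fin d) (Fin d) ℂ} (hK : K.IsHermitian) {κ : ℝ} (hκ0 : 0 < κ)
    (hκ : ∀ i, |hK.eigenvalues i| ≤ κ) {t : ℝ} (ht : 1 ≤ t) :
    ((mexp ((t : ℂ) • vecMulVec x (star x) + K)).trace).re ≤
      Real.exp (t + (star x ⬝ᵥ K *ᵥ x).re +
        (4*κ^2/t + (2*κ + 4*κ^2)/Real.sqrt t)) + ((d : ℝ) - 1) * Real.exp κ := by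
  have ht0 : (0:ℝ) < t := lt_of_lt_of_le one_pos ht
  set P : Matrix (Fin d) (Fin d) ℂ := vecMulVec x (star x) with hPdef
  set M : Matrix (Fin d) (Fin d) ℂ := (t : ℂ) • P + K with hMdef
  have hP : P.IsHermitian := isHermitian_rankOne x
  have hM : M.IsHermitian := (isHermitian_ofReal_smul hP t).add hK
  set μ : Fin d → ℝ := hM.eigenvalues with hμdef
  set u : Fin d → (Fin d → ℂ) := fun i => ⇑(hM.eigenvectorBasis i) with hudef
  have qfM : ∀ v : Fin d → ℂ, star v ⬝ᵥ M *ᵥ v =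
      ((t * Complex.normSq (star x ⬝ᵥ v) : ℝ) : ℂ) + star v ⬝ᵥ K *ᵥ v := by
    intro v
    rw [hMdef, add_mulVec, dotProduct_add, smul_mulVec, dotProduct_smul, hPdef,
      qf_rankOne, smul_eq_mul, ← Complex.ofReal_mul]
  have qfMre : ∀ v : Fin d → ℂ, (star v ⬝ᵥ M *ᵥ v).re =
      t * Complex.normSq (star x ⬝ᵥ v) + (star v ⬝ᵥ K *ᵥ v).re := by
    intro v
    rw [qfM v, Complex.add_re, Complex.ofReal_re]
  obtain ⟨i0, -, hmax⟩ := Finset.exists_max_image Finset.univ μ ⟨⟨0, hd⟩, Finset.mem_univ _⟩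
  have huunit : ∀ i, star (u i) ⬝ᵥ u i = 1 := by
    intro i
    simpa using ortho_eig hM i i
  have heig : ∀ i, (star (u i) ⬝ᵥ M *ᵥ u i).re = μ i := by
    intro i
    rw [hudef]
    simp only
    rw [qf_eig hM i, Complex.ofReal_re]
  have rayleigh : ∀ v : Fin d → ℂ, star v ⬝ᵥ v = 1 → (star v ⬝ᵥ M *ᵥ v).re ≤ μ i0 := by
    intro v hv
    rw [qf_spectral hM v, Complex.ofReal_re]
    have hsum1 : ∑ i, Complex.normSq
        ((star (hM.eigenvectorUnitary : Matrix (Fin d) (Fin d) ℂ) *ᵥ v) i) = 1 := by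
      have := (coord_norm_spectral hM v).trans hv
      exact_mod_cast this
    calc ∑ i, hM.eigenvalues i * Complex.normSq
          ((star (hM.eigenvectorUnitary : Matrix (Fin d) (Fin d) ℂ) *ᵥ v) i)
        ≤ ∑ i, μ i0 * Complex.normSq
          ((star (hM.eigenvectorUnitary : Matrix (Fin d) (Fin d) ℂ) *ᵥ v) i) := by
          refine Finset.sum_le_sum fun i _ => ?_
          exact mul_le_mul_of_nonneg_right (hmax i (Finset.mem_univ i)) (Complex.normSq_nonneg _)
      _ = μ i0 := by rw [← Finset.mul_sum, hsum1, mul_one]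
  set kx : ℝ := (star x ⬝ᵥ K *ᵥ x).re with hkxdef
  have hkx : |kx| ≤ κ := by
    have := qf_abs_le hK hκ x
    rwa [hx, Complex.one_re, mul_one] at this
  have hray_x : t + kx ≤ μ i0 := by
    have h1 := rayleigh x hx
    rw [qfMre x, hx] at h1
    simpa using h1
  have key : ∀ v : Fin d → ℂ, star x ⬝ᵥ v = 0 →
      (star v ⬝ᵥ M *ᵥ v).re ≤ κ * (star v ⬝ᵥ v).re := by
    intro v hv
    rw [qfMre v, hv]
    simp only [map_zero, mul_zero, zero_add]
    exact le_trans (le_abs_self _) (qf_abs_le hK hκ v)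
  have small : ∀ i, i ≠ i0 → μ i ≤ κ := by
    intro i hi
    by_contra hbig
    push_neg at hbig
    have hbig0 : κ < μ i0 := lt_of_lt_of_le hbig (hmax i (Finset.mem_univ i))
    obtain ⟨a, b, hab, horth⟩ : ∃ a b : ℂ, ¬(a = 0 ∧ b = 0) ∧
        a * (star x ⬝ᵥ u i) + b * (star x ⬝ᵥ u i0) = 0 := by
      by_cases hc : (star x ⬝ᵥ u i) = 0 ∧ (star x ⬝ᵥ u i0) = 0
      · exact ⟨1, 0, by simp, by simp [hc.1, hc.2]⟩
      · refine ⟨star x ⬝ᵥ u i0, -(star x ⬝ᵥ u i), ?_, by ring⟩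
        rintro ⟨h1, h2⟩
        exact hc ⟨neg_eq_zero.mp h2, h1⟩
    set y : Fin d → ℂ := a • u i + b • u i0 with hydef
    have hxy : star x ⬝ᵥ y = 0 := by
      rw [hydef, dotProduct_add, dotProduct_smul, dotProduct_smul, smul_eq_mul, smul_eq_mul]
      exact horth
    have hyy : star y ⬝ᵥ y = ((Complex.normSq a + Complex.normSq b : ℝ) : ℂ) := by
      rw [hydef, dot_add_expand, dot_smul_smul, dot_smul_smul, dot_smul_smul, dot_smul_smul,
        ortho_eig hM i i, ortho_eig hM i i0, ortho_eig hM i0 i, ortho_eig hM i0 i0]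
      simp only [if_pos rfl, if_neg hi, if_neg (Ne.symm hi)]
      push_cast
      rw [Complex.normSq_eq_conj_mul_self, Complex.normSq_eq_conj_mul_self]
      simp only [Complex.star_def]
      ring
    have hMyy : star y ⬝ᵥ M *ᵥ y =
        ((μ i * Complex.normSq a + μ i0 * Complex.normSq b : ℝ) : ℂ) := by
      rw [hydef, qf_add_expand, qf_smul_smul, qf_smul_smul, qf_smul_smul, qf_smul_smul,
        morth_eig hM i i, morth_eig hM i i0, morth_eig hM i0 i, morth_eig hM i0 i0]
      simp only [if_pos rfl, if_neg hi, if_neg (Ne.symm hi)]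
      push_cast
      rw [Complex.normSq_eq_conj_mul_self, Complex.normSq_eq_conj_mul_self]
      simp only [Complex.star_def]
      ring
    have hy0 : 0 < Complex.normSq a + Complex.normSq b := by
      rcases not_and_or.mp hab with h | h
      · have := Complex.normSq_pos.mpr h
        nlinarith [Complex.normSq_nonneg b]
      · have := Complex.normSq_pos.mpr h
        nlinarith [Complex.normSq_nonneg a]
    have h1 := key y hxy
    rw [hMyy, hyy, Complex.ofReal_re, Complex.ofReal_re] at h1
    rcases not_and_or.mp hab with h | h
    · have hna := Complex.normSq_pos.mpr h
      nlinarith [Complex.normSq_nonneg b, mul_pos (sub_pos.mpr hbig) hna,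
        mul_nonneg (sub_pos.mpr hbig0).le (Complex.normSq_nonneg b)]
    · have hnb := Complex.normSq_pos.mpr h
      nlinarith [Complex.normSq_nonneg a, mul_pos (sub_pos.mpr hbig0) hnb,
        mul_nonneg (sub_pos.mpr hbig).le (Complex.normSq_nonneg a)]
  have hμ0bound : μ i0 ≤ t + kx + (4*κ^2/t + (2*κ + 4*κ^2)/Real.sqrt t) := by
    set v0 : Fin d → ℂ := u i0 with hv0def
    set c : ℂ := star x ⬝ᵥ v0 with hcdef
    set p : ℝ := Complex.normSq c with hpdef
    set w : Fin d → ℂ := v0 - c • x with hwdef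
    have hxw : star x ⬝ᵥ w = 0 := by
      rw [hwdef, dotProduct_sub, dotProduct_smul, smul_eq_mul, hx, mul_one, ← hcdef, sub_self]
    have hcxw : star (c • x) ⬝ᵥ w = 0 := by
      rw [star_smul, smul_dotProduct, hxw, smul_zero]
    have hv0eq : v0 = c • x + w := by rw [hwdef]; abel
    have hv0v0 : star v0 ⬝ᵥ v0 = 1 := huunit i0
    have hxv0conj : star v0 ⬝ᵥ x = (starRingEnd ℂ) c := by
      rw [hcdef, ← star_dot_comm]
    have hww : star w ⬝ᵥ w = ((1 - p : ℝ) : ℂ) := by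
      rw [hwdef, star_sub, sub_dotProduct, dotProduct_sub, dotProduct_sub, hv0v0,
        dotProduct_smul, hxv0conj, star_smul, smul_dotProduct, smul_dotProduct, ← hcdef,
        dotProduct_smul, hx]
      push_cast
      rw [Complex.normSq_eq_conj_mul_self]
      simp only [smul_eq_mul, Complex.star_def]
      ring
    have hwre : (star w ⬝ᵥ w).re = 1 - p := by rw [hww, Complex.ofReal_re]
    have hp0 : (0:ℝ) ≤ p := Complex.normSq_nonneg c
    have hp1 : p ≤ 1 := by
      have := dot_self_re_nonneg w
      rw [hwre] at this
      linarith
    set kv : ℝ := (star v0 ⬝ᵥ K *ᵥ v0).re with hkvdef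
    have hkv : |kv| ≤ κ := by
      have := qf_abs_le hK hκ v0
      rwa [hv0v0, Complex.one_re, mul_one] at this
    have hμeq : μ i0 = t * p + kv := by
      rw [← heig i0, qfMre (u i0), ← hv0def, ← hcdef, ← hpdef, ← hkvdef]
    have hplow : t * (1 - p) ≤ 2 * κ := by
      have h1 : t + kx ≤ t * p + kv := by rw [← hμeq]; exact hray_x
      have h2 := abs_le.mp hkx
      have h3 := abs_le.mp hkv
      nlinarith
    set sq : ℝ := Real.sqrt t with hsdef
    have hs0 : (0:ℝ) < sq := Real.sqrt_pos.mpr ht0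
    have hss : sq * sq = t := Real.mul_self_sqrt ht0.le
    set r : ℝ := Real.sqrt sq with hrdef
    have hr0 : (0:ℝ) < r := Real.sqrt_pos.mpr hs0
    have hr2 : r ^ 2 = sq := Real.sq_sqrt hs0.le
    have hrinv : r⁻¹ ^ 2 = sq⁻¹ := by rw [inv_pow, hr2]
    have hcx_norm : (star (c • x) ⬝ᵥ (c • x)).re = p := by
      rw [dot_smul_smul, hx, mul_one, Complex.star_def, ← Complex.normSq_eq_conj_mul_self,
        Complex.ofReal_re]
    have hcross := cross_bound hK hκ (c • x) w hcxw r hr0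
    rw [hrinv, hr2, hcx_norm, hwre] at hcross
    have hkcx : (star (c • x) ⬝ᵥ K *ᵥ (c • x)).re = p * kx := by
      rw [qf_smul_smul, Complex.star_def, ← Complex.normSq_eq_conj_mul_self,
        Complex.re_ofReal_mul, ← hpdef, ← hkxdef]
    have hkw : |(star w ⬝ᵥ K *ᵥ w).re| ≤ κ * (1 - p) := by
      have := qf_abs_le hK hκ w
      rwa [hwre] at this
    have hkv_exp : kv = p * kx +
        ((star (c • x) ⬝ᵥ K *ᵥ w) + (star w ⬝ᵥ K *ᵥ (c • x))).re +
        (star w ⬝ᵥ K *ᵥ w).re := by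
      rw [hkvdef]
      conv_lhs => rw [hv0eq]
      rw [qf_add_expand, Complex.add_re, Complex.add_re, Complex.add_re, hkcx, Complex.add_re]
      ring
    have hsinv0 : (0:ℝ) ≤ sq⁻¹ := (inv_nonneg).mpr hs0.le
    have hinvt0 : (0:ℝ) ≤ t⁻¹ := (inv_nonneg).mpr ht0.le
    have h5 : 1 - p ≤ 2 * κ * t⁻¹ := by
      have : (1 - p) = (t * (1 - p)) * t⁻¹ := by field_simp
      rw [this]
      exact mul_le_mul_of_nonneg_right hplow hinvt0
    have h6 : sq * (1 - p) ≤ 2 * κ * sq⁻¹ := by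
      have he : sq * (1 - p) = (t * (1 - p)) * sq⁻¹ := by
        rw [← hss]
        field_simp
      rw [he]
      exact mul_le_mul_of_nonneg_right hplow hsinv0
    have h7 : sq⁻¹ * p ≤ sq⁻¹ := by
      calc sq⁻¹ * p ≤ sq⁻¹ * 1 := mul_le_mul_of_nonneg_left hp1 hsinv0
        _ = sq⁻¹ := mul_one _
    have h8 : κ * (1 - p) ≤ 2 * κ^2 * t⁻¹ := by
      calc κ * (1 - p) ≤ κ * (2 * κ * t⁻¹) := mul_le_mul_of_nonneg_left h5 hκ0.le
        _ = 2 * κ^2 * t⁻¹ := by ring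
    have h9 : (1 - p) * (-κ) ≤ (1 - p) * kx := by
      exact mul_le_mul_of_nonneg_left (abs_le.mp hkx).1 (by linarith)
    have h10 : 0 ≤ t * (1 - p) := mul_nonneg ht0.le (by linarith)
    have hkw2 := (abs_le.mp hkw).2
    have hcr2 : ((star (c • x) ⬝ᵥ K *ᵥ w) + (star w ⬝ᵥ K *ᵥ (c • x))).re ≤
        (2*κ + 4*κ^2) * sq⁻¹ := by
      have hmul := mul_le_mul_of_nonneg_left (add_le_add h7 h6)
        (by positivity : (0:ℝ) ≤ 2*κ)
      calc ((star (c • x) ⬝ᵥ K *ᵥ w) + (star w ⬝ᵥ K *ᵥ (c • x))).re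
          ≤ 2 * κ * (sq⁻¹ * p + sq * (1 - p)) := hcross
        _ ≤ 2 * κ * (sq⁻¹ + 2 * κ * sq⁻¹) := hmul
        _ = (2*κ + 4*κ^2) * sq⁻¹ := by ring
    have hkw3 : (star w ⬝ᵥ K *ᵥ w).re ≤ 2 * κ^2 * t⁻¹ := le_trans hkw2 h8
    have hg1 : t * p = t - t * (1 - p) := by ring
    have hg2 : p * kx = kx - (1 - p) * kx := by ring
    rw [hμeq, hkv_exp, div_eq_mul_inv, div_eq_mul_inv]
    linarith [hcr2, hkw3, h9, h10, hg1, hg2, h8]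
  rw [trace_mexp hM, Complex.ofReal_re]
  rw [← Finset.add_sum_erase Finset.univ (fun i => Real.exp (μ i)) (Finset.mem_univ i0)]
  have hd1 : (1:ℕ) ≤ d := hd
  have hcard : ((Finset.univ.erase i0).card : ℝ) = (d : ℝ) - 1 := by
    rw [Finset.card_erase_of_mem (Finset.mem_univ i0)]
    simp [Nat.cast_sub hd1]
  refine add_le_add (Real.exp_le_exp.mpr hμ0bound) ?_
  calc ∑ i ∈ Finset.univ.erase i0, Real.exp (μ i)
      ≤ (Finset.univ.erase i0).card • Real.exp κ := by
        refine Finset.sum_le_card_nsmul _ _ _ fun i hi => ?_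
        exact Real.exp_le_exp.mpr (small i (Finset.mem_erase.mp hi).1)
    _ = ((d : ℝ) - 1) * Real.exp κ := by rw [nsmul_eq_mul, hcard]

lemma sqrt_tendsto_atTop : Filter.Tendsto Real.sqrt Filter.atTop Filter.atTop := by
  apply Filter.tendsto_atTop_atTop.mpr
  intro b
  refine ⟨(max b 0)^2, fun a ha => ?_⟩
  have h0 : 0 ≤ max b 0 := le_max_right _ _
  have h1 : max b 0 ≤ Real.sqrt a := by
    rw [show max b 0 = Real.sqrt ((max b 0)^2) from (Real.sqrt_sq h0).symm]
    exact Real.sqrt_le_sqrt ha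
  exact le_trans (le_max_left b 0) h1

lemma lower_bound (x : Fin d → ℂ) (hx : star x ⬝ᵥ x = 1)
    {K : Matrix (Fin d) (Fin d) ℂ} (hK : K.IsHermitian) (t : ℝ) :
    Real.exp (t + (star x ⬝ᵥ K *ᵥ x).re) ≤
      ((mexp ((t : ℂ) • vecMulVec x (star x) + K)).trace).re := by
  have hP := isHermitian_rankOne x
  have hM : ((t : ℂ) • vecMulVec x (star x) + K).IsHermitian :=
    (isHermitian_ofReal_smul hP t).add hK
  have h := exp_qf_le_trace hM x hx
  have hq : (star x ⬝ᵥ ((t : ℂ) • vecMulVec x (star x) + K) *ᵥ x).re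
      = t + (star x ⬝ᵥ K *ᵥ x).re := by
    rw [add_mulVec, dotProduct_add, smul_mulVec, dotProduct_smul, qf_rankOne, hx]
    simp [smul_eq_mul]
  rwa [hq] at h

lemma unit_le (hd : 0 < d) (x : Fin d → ℂ) (hx : star x ⬝ᵥ x = 1)
    {KB KC : Matrix (Fin d) (Fin d) ℂ}
    (hKB : KB.IsHermitian) (hKC : KC.IsHermitian) {κ : ℝ} (hκ0 : 0 < κ)
    (hκ : ∀ i, |hKC.eigenvalues i| ≤ κ)
    (H : ∀ t : ℝ, 1 ≤ t →
      ((mexp ((t : ℂ) • vecMulVec x (star x) + KB)).trace).re ≤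
        ((mexp ((t : ℂ) • vecMulVec x (star x) + KC)).trace).re) :
    (star x ⬝ᵥ KB *ᵥ x).re ≤ (star x ⬝ᵥ KC *ᵥ x).re := by
  set kB : ℝ := (star x ⬝ᵥ KB *ᵥ x).re with hkB
  set kC : ℝ := (star x ⬝ᵥ KC *ᵥ x).re with hkC
  set ε : ℝ → ℝ := fun t => 4*κ^2/t + (2*κ + 4*κ^2)/Real.sqrt t with hε
  have step : ∀ t : ℝ, 1 ≤ t → Real.exp kB ≤
      Real.exp (kC + ε t) + ((d:ℝ)-1) * Real.exp (κ - t) := by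
    intro t ht
    have h1 := lower_bound x hx hKB t
    have h2 := H t ht
    have h3 := main_bound hd x hx hKC hκ0 hκ ht
    have h4 : Real.exp (t + kB) ≤
        Real.exp (t + kC + ε t) + ((d:ℝ)-1) * Real.exp κ := by
      calc Real.exp (t + kB) ≤ _ := h1
        _ ≤ _ := h2
        _ ≤ _ := h3
    have he1 : Real.exp (t + kB) = Real.exp t * Real.exp kB := Real.exp_add t kB
    have he2 : Real.exp (t + kC + ε t) = Real.exp t * Real.exp (kC + ε t) := by
      rw [← Real.exp_add]
      ring_nf
    have he0 : Real.exp t * Real.exp (κ - t) = Real.exp κ := by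
      rw [← Real.exp_add]
      ring_nf
    have he3 : ((d:ℝ)-1) * Real.exp κ = Real.exp t * (((d:ℝ)-1) * Real.exp (κ - t)) := by
      rw [← he0]
      ring
    rw [he1, he2, he3, ← mul_add] at h4
    exact le_of_mul_le_mul_left h4 (Real.exp_pos t)
  have hεlim : Filter.Tendsto ε Filter.atTop (nhds 0) := by
    have l1 : Filter.Tendsto (fun t : ℝ => 4*κ^2/t) Filter.atTop (nhds 0) := by
      have h0 := tendsto_inv_atTop_zero.const_mul (4*κ^2)
      rw [mul_zero] at h0
      simpa [div_eq_mul_inv] using h0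
    have l2 : Filter.Tendsto (fun t : ℝ => (2*κ + 4*κ^2)/Real.sqrt t) Filter.atTop (nhds 0) := by
      have h0 := ((tendsto_inv_atTop_zero).comp sqrt_tendsto_atTop).const_mul (2*κ + 4*κ^2)
      rw [mul_zero] at h0
      simpa [div_eq_mul_inv, Function.comp_def] using h0
    simpa using l1.add l2
  have hexplim : Filter.Tendsto
      (fun t : ℝ => Real.exp (kC + ε t) + ((d:ℝ)-1) * Real.exp (κ - t))
      Filter.atTop (nhds (Real.exp kC)) := by
    have l1 : Filter.Tendsto (fun t : ℝ => kC + ε t) Filter.atTop (nhds (kC + 0)) :=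
      tendsto_const_nhds.add hεlim
    have l2 := (Real.continuous_exp.tendsto (kC + 0)).comp l1
    have l3 : Filter.Tendsto (fun t : ℝ => κ - t) Filter.atTop Filter.atBot := by
      simpa [sub_eq_add_neg] using
        tendsto_atBot_add_const_left Filter.atTop κ (tendsto_neg_atTop_atBot)
    have l4 := Real.tendsto_exp_atBot.comp l3
    have l5 := l4.const_mul ((d:ℝ)-1)
    have l6 := l2.add l5
    simpa [Function.comp_def] using l6
  have hfinal : Real.exp kB ≤ Real.exp kC :=
    ge_of_tendsto hexplim (Filter.eventually_atTop.mpr ⟨1, step⟩)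
  exact Real.exp_le_exp.mp hfinal

end ChaosAux

/-- if `tr exp(α log A + (1−α) log B) ≤ tr exp(α log A + (1−α) log C)`
for every positive definite `A`, then `log B ≤ log C`. -/
theorem chaotic_order_of_trace_exp {d : ℕ} (hd : 2 ≤ d) (α : ℝ) (hα0 : 0 < α)
    (hα1 : α < 1) (B C : Matrix (Fin d) (Fin d) ℂ) (hB : B.PosDef) (hC : C.PosDef)
    (h : ∀ A : Matrix (Fin d) (Fin d) ℂ, A.PosDef →
      (mexp ((α : ℂ) • mlog A + ((1 - α : ℝ) : ℂ) • mlog B)).trace.re ≤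
        (mexp ((α : ℂ) • mlog A + ((1 - α : ℝ) : ℂ) • mlog C)).trace.re) :
    loewnerLE (mlog B) (mlog C) := by
  have hd0 : 0 < d := lt_of_lt_of_le two_pos hd
  have h1α : (0:ℝ) < 1 - α := by linarith
  have hLBh : (mlog B).IsHermitian := isHermitian_mfun _ hB.1
  have hLCh : (mlog C).IsHermitian := isHermitian_mfun _ hC.1
  set LB := mlog B with hLBdef
  set LC := mlog C with hLCdef
  set KB : Matrix (Fin d) (Fin d) ℂ := ((1 - α : ℝ) : ℂ) • LB with hKBdef
  set KC : Matrix (Fin d) (Fin d) ℂ := ((1 - α : ℝ) : ℂ) • LC with hKCdef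
  have hKB : KB.IsHermitian := isHermitian_ofReal_smul hLBh _
  have hKC : KC.IsHermitian := isHermitian_ofReal_smul hLCh _
  have h' : ∀ M : Matrix (Fin d) (Fin d) ℂ, M.IsHermitian →
      (mexp (M + KB)).trace.re ≤ (mexp (M + KC)).trace.re := by
    intro M hM
    have hM' : (((α⁻¹ : ℝ) : ℂ) • M).IsHermitian := isHermitian_ofReal_smul hM _
    have hA : (mexp (((α⁻¹ : ℝ) : ℂ) • M)).PosDef := mexp_posDef hM'
    have hlog : mlog (mexp (((α⁻¹ : ℝ) : ℂ) • M)) = ((α⁻¹ : ℝ) : ℂ) • M := mlog_mexp hM'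
    have hh := h (mexp (((α⁻¹ : ℝ) : ℂ) • M)) hA
    rw [hlog, smul_smul] at hh
    have hα' : (α : ℂ) ≠ 0 := Complex.ofReal_ne_zero.mpr hα0.ne'
    have hc : (α : ℂ) * ((α⁻¹ : ℝ) : ℂ) = 1 := by
      rw [Complex.ofReal_inv]
      exact mul_inv_cancel₀ hα'
    rw [hc, one_smul] at hh
    exact hh
  set κ : ℝ := 1 + ∑ i, |hKC.eigenvalues i| with hκdef
  have hκ0 : 0 < κ := by
    have : (0:ℝ) ≤ ∑ i, |hKC.eigenvalues i| :=
      Finset.sum_nonneg fun i _ => abs_nonneg _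
    linarith
  have hκ : ∀ i, |hKC.eigenvalues i| ≤ κ := by
    intro i
    have h1 : |hKC.eigenvalues i| ≤ ∑ j, |hKC.eigenvalues j| :=
      Finset.single_le_sum (f := fun j => |hKC.eigenvalues j|)
        (fun j _ => abs_nonneg _) (Finset.mem_univ i)
    linarith
  have hunit : ∀ x : Fin d → ℂ, star x ⬝ᵥ x = 1 →
      (star x ⬝ᵥ LB *ᵥ x).re ≤ (star x ⬝ᵥ LC *ᵥ x).re := by
    intro x hx
    have hquot := unit_le hd0 x hx hKB hKC hκ0 hκ (fun t ht => h'
      ((t : ℂ) • vecMulVec x (star x))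
      (isHermitian_ofReal_smul (isHermitian_rankOne x) t))
    have e1 : (star x ⬝ᵥ KB *ᵥ x).re = (1 - α) * (star x ⬝ᵥ LB *ᵥ x).re := by
      rw [hKBdef, smul_mulVec, dotProduct_smul, smul_eq_mul, Complex.re_ofReal_mul]
    have e2 : (star x ⬝ᵥ KC *ᵥ x).re = (1 - α) * (star x ⬝ᵥ LC *ᵥ x).re := by
      rw [hKCdef, smul_mulVec, dotProduct_smul, smul_eq_mul, Complex.re_ofReal_mul]
    rw [e1, e2] at hquot
    exact le_of_mul_le_mul_left hquot h1α
  refine posSemidef_iff_dotProduct_mulVec.mpr ⟨hLCh.sub hLBh, fun v => ?_⟩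
  by_cases hv : v = 0
  · simp [hv]
  · set n : ℝ := ∑ i, Complex.normSq (v i) with hndef
    have hvn : star v ⬝ᵥ v = ((n : ℝ) : ℂ) := dot_star_self_eq v
    have hn0 : 0 < n := by
      obtain ⟨i, hi⟩ := Function.ne_iff.mp hv
      exact Finset.sum_pos' (fun j _ => Complex.normSq_nonneg _)
        ⟨i, Finset.mem_univ i, Complex.normSq_pos.mpr hi⟩
    set c : ℝ := (Real.sqrt n)⁻¹ with hcdef
    have hsq0 : 0 < Real.sqrt n := Real.sqrt_pos.mpr hn0
    have hc0 : 0 < c := inv_pos.mpr hsq0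
    set y : Fin d → ℂ := ((c : ℝ) : ℂ) • v with hydef
    have hccn : c * c * n = 1 := by
      have h1 : Real.sqrt n * Real.sqrt n = n := Real.mul_self_sqrt hn0.le
      rw [hcdef]
      field_simp
      rw [Real.sq_sqrt hn0.le]
    have hy : star y ⬝ᵥ y = 1 := by
      rw [hydef, dot_smul_smul, hvn, Complex.star_def, Complex.conj_ofReal,
        ← Complex.ofReal_mul, ← Complex.ofReal_mul, hccn, Complex.ofReal_one]
    have hcomp := hunit y hy
    have eB : (star y ⬝ᵥ LB *ᵥ y).re = (c * c) * (star v ⬝ᵥ LB *ᵥ v).re := by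
      rw [hydef, qf_smul_smul, Complex.star_def, Complex.conj_ofReal,
        show ((c:ℂ) * (c:ℂ)) = (((c * c : ℝ)) : ℂ) by push_cast; ring,
        Complex.re_ofReal_mul]
    have eC : (star y ⬝ᵥ LC *ᵥ y).re = (c * c) * (star v ⬝ᵥ LC *ᵥ v).re := by
      rw [hydef, qf_smul_smul, Complex.star_def, Complex.conj_ofReal,
        show ((c:ℂ) * (c:ℂ)) = (((c * c : ℝ)) : ℂ) by push_cast; ring,
        Complex.re_ofReal_mul]
    rw [eB, eC] at hcomp
    have hcc : 0 < c * c := mul_pos hc0 hc0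
    have hvcomp : (star v ⬝ᵥ LB *ᵥ v).re ≤ (star v ⬝ᵥ LC *ᵥ v).re :=
      le_of_mul_le_mul_left hcomp hcc
    have hqB := qf_spectral hLBh v
    have hqC := qf_spectral hLCh v
    have hgoal : star v ⬝ᵥ (LC - LB) *ᵥ v =
        ((((star v ⬝ᵥ LC *ᵥ v).re - (star v ⬝ᵥ LB *ᵥ v).re : ℝ)) : ℂ) := by
      rw [sub_mulVec, dotProduct_sub, hqB, hqC]
      push_cast
      simp [Complex.ofReal_re]
    rw [hgoal]
    rw [Complex.zero_le_real]
    linarith
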